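/- Let p be an odd prime and suppose r ≥ 1. The monomial y_1^p·w_1·w_2·…·w_s does not lie in the Hilbert ideal I_H; consequently the top degree of the coinvariant ring R/I_H is at least p + s. -/

import Mathlib

open MvPolynomial

noncomputable section

abbrev DVar (r s : ℕ) := (Fin r ⊕ Fin r) ⊕ (Fin s ⊕ Fin s)

def dswap {r s : ℕ} : DVar r s → DVar r s
  | .inl (.inl i) => .inl (.inr i)
  | .inl (.inr i) => .inl (.inl i)
  | .inr (.inl j) => .inr (.inr j)
  | .inr (.inr j) => .inr (.inl j)

def sigmaMap (F : Type*) [Field F] (r s : ℕ) :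
    MvPolynomial (DVar r s) F →ₐ[F] MvPolynomial (DVar r s) F :=
  MvPolynomial.rename dswap

def rhoCoeff {F : Type*} [Field F] {r s : ℕ} (lam : Fin r → F) : DVar r s → F
  | .inl (.inl i) => lam i
  | .inl (.inr i) => (lam i)⁻¹
  | .inr _ => 1

def rhoMap (F : Type*) [Field F] (r s : ℕ) (lam : Fin r → F) :
    MvPolynomial (DVar r s) F →ₐ[F] MvPolynomial (DVar r s) F :=
  MvPolynomial.aeval fun v => MvPolynomial.C (rhoCoeff lam v) * MvPolynomial.X v

def HilbertIdeal (F : Type*) [Field F] (r s : ℕ) (lam : Fin r → F) :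
    Ideal (MvPolynomial (DVar r s) F) :=
  Ideal.span {f | sigmaMap F r s f = f ∧ rhoMap F r s lam f = f ∧ constantCoeff f = 0}

def IsMonomial {σ F : Type*} [CommSemiring F] (f : MvPolynomial σ F) : Prop :=
  ∃ d : σ →₀ ℕ, f = monomial d 1

def GSet (F : Type*) [Field F] (r s p : ℕ) (lam : Fin r → F) :
    Set (MvPolynomial (DVar r s) F) :=
  {f | ∃ m, IsMonomial m ∧ rhoMap F r s lam m = m ∧ sigmaMap F r s m ≠ m ∧
      m.totalDegree ≤ p ∧ f = m + sigmaMap F r s m} ∪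
  {f | ∃ (m : MvPolynomial (DVar r s) F) (v : DVar r s), IsMonomial m ∧ rhoMap F r s lam m = m ∧ m.totalDegree ≤ p ∧
      X v ∣ m ∧ f = X v * m} ∪
  {f | (∃ i : Fin r, f = X (Sum.inl (Sum.inl i)) * X (Sum.inl (Sum.inr i))) ∨
       (∃ j : Fin s, f = X (Sum.inr (Sum.inl j)) * X (Sum.inr (Sum.inr j)))}

def lmExp {σ F : Type*} [CommSemiring F] (mo : MonomialOrder σ) (f : MvPolynomial σ F) :
    σ →₀ ℕ :=
  mo.toSyn.symm (f.support.sup fun d => mo.toSyn d)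

namespace Stmt17

lemma dswap_dswap {r s : ℕ} (v : DVar r s) : dswap (dswap v) = v := by
  rcases v with (i|i)|(j|j) <;> rfl

lemma dswap_inj {r s : ℕ} : Function.Injective (dswap (r := r) (s := s)) :=
  Function.Involutive.injective dswap_dswap

def sstar {r s : ℕ} (d : DVar r s →₀ ℕ) : DVar r s →₀ ℕ := Finsupp.mapDomain dswap d

lemma sstar_apply {r s : ℕ} (d : DVar r s →₀ ℕ) (v : DVar r s) :
    sstar d v = d (dswap v) := by
  have h := Finsupp.mapDomain_apply dswap_inj d (dswap v)
  rwa [dswap_dswap] at h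

lemma sstar_sstar {r s : ℕ} (d : DVar r s →₀ ℕ) : sstar (sstar d) = d := by
  ext v; rw [sstar_apply, sstar_apply, dswap_dswap]

variable {F : Type*} [Field F] {r s : ℕ}

lemma rho_monomial (lam : Fin r → F) (d : DVar r s →₀ ℕ) (c : F) :
    rhoMap F r s lam (monomial d c)
      = monomial d (c * d.prod fun v n => rhoCoeff lam v ^ n) := by
  rw [rhoMap, aeval_monomial]
  have h1 : (d.prod fun v n => (C (rhoCoeff lam v) * X v : MvPolynomial (DVar r s) F) ^ n)
      = C (d.prod fun v n => rhoCoeff lam v ^ n) * monomial d 1 := by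
    rw [Finsupp.prod, Finsupp.prod, ← prod_X_pow_eq_monomial, map_prod, ← Finset.prod_mul_distrib]
    exact Finset.prod_congr rfl fun v _ => by rw [mul_pow, map_pow]
  rw [h1, ← mul_assoc]
  rw [show (algebraMap F (MvPolynomial (DVar r s) F)) c = C c from rfl, ← C_mul, C_mul_monomial,
    mul_one]

lemma coeff_rhoMap (lam : Fin r → F) (f : MvPolynomial (DVar r s) F) (d : DVar r s →₀ ℕ) :
    coeff d (rhoMap F r s lam f) = (d.prod fun v n => rhoCoeff lam v ^ n) * coeff d f := by
  conv_lhs => rw [f.as_sum, map_sum]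
  rw [coeff_sum]
  simp_rw [rho_monomial, coeff_monomial]
  rw [Finset.sum_ite_eq' f.support d]
  by_cases hd : d ∈ f.support
  · rw [if_pos hd]; ring
  · rw [if_neg hd, MvPolynomial.notMem_support_iff.mp hd, mul_zero]

lemma weight_eq_one {lam : Fin r → F} {f : MvPolynomial (DVar r s) F}
    (hf : rhoMap F r s lam f = f) {d : DVar r s →₀ ℕ} (hd : coeff d f ≠ 0) :
    (d.prod fun v n => rhoCoeff lam v ^ n) = 1 := by
  have h : coeff d (rhoMap F r s lam f) = coeff d f := by rw [hf]
  rw [coeff_rhoMap] at h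
  have h2 : (d.prod fun v n => rhoCoeff lam v ^ n) * coeff d f = 1 * coeff d f := by
    rw [one_mul]; exact h
  exact mul_right_cancel₀ hd h2

lemma coeff_sstar {f : MvPolynomial (DVar r s) F} (hf : sigmaMap F r s f = f)
    (d : DVar r s →₀ ℕ) : coeff (sstar d) f = coeff d f := by
  have h := coeff_rename_mapDomain dswap dswap_inj f d
  rw [show rename dswap f = f from hf] at h
  exact h


section Encode

variable (p : ℕ) (i₀ : Fin r)

/-- the exponent function of the monomials in the distinguished set `S`. -/
def eFun (b : Bool) (T : Finset (Fin s)) : DVar r s → ℕ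
  | .inl (.inl i) => if b = true ∧ i = i₀ then p else 0
  | .inl (.inr i) => if b = false ∧ i = i₀ then p else 0
  | .inr (.inl j) => if j ∈ T then 1 else 0
  | .inr (.inr j) => if j ∈ T then 0 else 1

def eE (b : Bool) (T : Finset (Fin s)) : DVar r s →₀ ℕ :=
  Finsupp.equivFunOnFinite.symm (eFun p i₀ b T)

lemma eE_apply (b : Bool) (T : Finset (Fin s)) (v : DVar r s) :
    eE p i₀ b T v = eFun p i₀ b T v := rfl

def decodeB (μ : DVar r s →₀ ℕ) : Bool := decide (μ (.inl (.inl i₀)) ≠ 0)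

def decodeT (μ : DVar r s →₀ ℕ) : Finset (Fin s) :=
  Finset.univ.filter fun j => μ (.inr (.inl j)) ≠ 0

lemma decodeB_eE (hp0 : p ≠ 0) (b : Bool) (T : Finset (Fin s)) :
    decodeB i₀ (eE p i₀ b T) = b := by
  rw [decodeB, eE_apply]
  cases b
  · simp [eFun]
  · simp [eFun, hp0]

lemma decodeT_eE (b : Bool) (T : Finset (Fin s)) :
    decodeT (eE p i₀ b T) = T := by
  ext j
  by_cases hj : j ∈ T <;> simp [decodeT, eE_apply, eFun, hj]

/-- any exponent vector satisfying the four structural properties is of the form `eE b' T'`. -/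
lemma normal_form (hp0 : p ≠ 0) (μ : DVar r s →₀ ℕ)
    (P1 : μ (.inl (.inl i₀)) + μ (.inl (.inr i₀)) = p)
    (P2 : μ (.inl (.inl i₀)) = 0 ∨ μ (.inl (.inl i₀)) = p)
    (P3 : ∀ i, i ≠ i₀ → μ (.inl (.inl i)) = 0 ∧ μ (.inl (.inr i)) = 0)
    (P4 : ∀ j, μ (.inr (.inl j)) + μ (.inr (.inr j)) = 1) :
    μ = eE p i₀ (decodeB i₀ μ) (decodeT μ) := by
  ext v
  rw [eE_apply]
  rcases v with (i | i) | (j | j)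
  · by_cases hi : i = i₀
    · subst hi
      show μ _ = if _ ∧ _ then p else 0
      rcases P2 with h0 | hP
      · rw [h0]
        simp [decodeB, h0]
      · rw [hP]
        simp [decodeB, hP, hp0]
    · have := (P3 i hi).1
      simp [eFun, hi, this]
  · by_cases hi : i = i₀
    · subst hi
      show μ _ = if _ ∧ _ then p else 0
      rcases P2 with h0 | hP
      · rw [h0] at P1
        simp only [zero_add] at P1
        simp [decodeB, h0, P1]
      · have : μ (.inl (.inr i)) = 0 := by omega
        simp [decodeB, hP, hp0, this]
    · have := (P3 i hi).2
      simp [eFun, hi, this]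
  · show μ _ = if j ∈ decodeT μ then 1 else 0
    have := P4 j
    by_cases hz : μ (.inr (.inl j)) = 0
    · simp [decodeT, hz]
    · have h1 : μ (.inr (.inl j)) = 1 := by omega
      simp [decodeT, hz, h1]
  · show μ _ = if j ∈ decodeT μ then 0 else 1
    have := P4 j
    by_cases hz : μ (.inr (.inl j)) = 0
    · simp [decodeT, hz]
      omega
    · simp [decodeT, hz]
      omega

end Encode

section Key

variable {p : ℕ} {i₀ : Fin r}

lemma weight_lam (lam : Fin r → F) {m : DVar r s →₀ ℕ}
    (hx : ∀ i, i ≠ i₀ → m (.inl (.inl i)) = 0)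
    (hy : ∀ i, i ≠ i₀ → m (.inl (.inr i)) = 0)
    (hw : (m.prod fun v n => rhoCoeff lam v ^ n) = 1) :
    lam i₀ ^ m (.inl (.inl i₀)) * (lam i₀)⁻¹ ^ m (.inl (.inr i₀)) = 1 := by
  rw [Finsupp.prod_fintype _ _ (fun v => pow_zero _)] at hw
  simp only [Fintype.prod_sum_type] at hw
  simp only [rhoCoeff, one_pow, Finset.prod_const_one, mul_one] at hw
  rw [Finset.prod_eq_single i₀ (fun i _ hne => by rw [hx i hne, pow_zero]) (by simp),
      Finset.prod_eq_single i₀ (fun i _ hne => by rw [hy i hne, pow_zero]) (by simp)] at hw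
  exact hw

lemma pow_vals (hp : p.Prime) {lam0 : F} (h1 : lam0 ^ p = 1) (hne : lam0 ≠ 1)
    {n : ℕ} (hn : lam0 ^ n = 1) (hle : n ≤ p) : n = 0 ∨ n = p := by
  have ho : orderOf lam0 = p := by
    rcases (Nat.Prime.eq_one_or_self_of_dvd hp _ (orderOf_dvd_of_pow_eq_one h1)) with h | h
    · exact absurd (orderOf_eq_one_iff.mp h) hne
    · exact h
  have hdvd := orderOf_dvd_of_pow_eq_one hn
  rw [ho] at hdvd
  rcases hdvd with ⟨k, rfl⟩
  rcases Nat.lt_or_ge k 2 with hk | hk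
  · interval_cases k
    · left; simp
    · right; simp
  · exfalso
    have h2 : p * 2 ≤ p * k := Nat.mul_le_mul le_rfl hk
    have h3 := le_trans h2 hle
    have h4 := hp.pos
    omega

lemma key (hp : p.Prime) {lam : Fin r → F} (hlam : ∀ i, lam i ^ p = 1 ∧ lam i ≠ 1)
    {b : Bool} {T : Finset (Fin s)} {ν m : DVar r s →₀ ℕ}
    (hsum : ν + m = eE p i₀ b T)
    (hw : (m.prod fun v n => rhoCoeff lam v ^ n) = 1) :
    ν + sstar m = eE p i₀ (decodeB i₀ (ν + sstar m)) (decodeT (ν + sstar m)) := by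
  have hpt : ∀ v, ν v + m v = eFun p i₀ b T v := fun v => by
    rw [← Finsupp.add_apply, hsum, eE_apply]
  have hμ : ∀ v, (ν + sstar m) v = ν v + m (dswap v) := fun v => by
    rw [Finsupp.add_apply, sstar_apply]
  have hxm : ∀ i, i ≠ i₀ → m (.inl (.inl i)) = 0 ∧ ν (.inl (.inl i)) = 0 := by
    intro i hi
    have h := hpt (.inl (.inl i))
    simp only [eFun, hi, and_false, if_false] at h
    omega
  have hym : ∀ i, i ≠ i₀ → m (.inl (.inr i)) = 0 ∧ ν (.inl (.inr i)) = 0 := by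
    intro i hi
    have h := hpt (.inl (.inr i))
    simp only [eFun, hi, and_false, if_false] at h
    omega
  have wl := weight_lam lam (fun i hi => (hxm i hi).1) (fun i hi => (hym i hi).1) hw
  have hx0 := hpt (.inl (.inl i₀))
  have hy0 := hpt (.inl (.inr i₀))
  have hP2aux : (ν (.inl (.inl i₀)) + m (.inl (.inr i₀)) = 0
      ∨ ν (.inl (.inl i₀)) + m (.inl (.inr i₀)) = p)
      ∧ (ν (.inl (.inl i₀)) + m (.inl (.inr i₀)))
        + (ν (.inl (.inr i₀)) + m (.inl (.inl i₀))) = p := by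
    cases b with
    | true =>
      simp only [eFun] at hx0 hy0
      norm_num at hx0 hy0
      have hc : m (.inl (.inr i₀)) = 0 := by omega
      rw [hc, pow_zero, mul_one] at wl
      have hav := pow_vals hp (hlam i₀).1 (hlam i₀).2 wl (by omega)
      constructor
      · omega
      · omega
    | false =>
      simp only [eFun] at hx0 hy0
      norm_num at hx0 hy0
      have ha : m (.inl (.inl i₀)) = 0 := by omega
      rw [ha, pow_zero, one_mul, inv_pow, inv_eq_one] at wl
      have hcv := pow_vals hp (hlam i₀).1 (hlam i₀).2 wl (by omega)
      constructor
      · omega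
      · omega
  have key4 : ∀ j, (ν + sstar m) (.inr (.inl j)) + (ν + sstar m) (.inr (.inr j)) = 1 := by
    intro j
    have h1 := hpt (.inr (.inl j))
    have h2 := hpt (.inr (.inr j))
    rw [hμ, hμ]
    simp only [dswap]
    by_cases hj : j ∈ T <;> simp only [eFun, hj, if_true, if_false] at h1 h2 <;> omega
  refine normal_form p i₀ hp.pos.ne' _ ?_ ?_ ?_ key4
  · rw [hμ, hμ]
    simp only [dswap]
    omega
  · rw [hμ]
    simp only [dswap]
    exact hP2aux.1
  · intro i hi
    rw [hμ, hμ]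
    simp only [dswap]
    exact ⟨by rw [(hym i hi).1, (hxm i hi).2], by rw [(hxm i hi).1, (hym i hi).2]⟩

end Key

section Main

variable {p : ℕ} {i₀ : Fin r}

lemma main [CharP F 2] (hp : p.Prime) {lam : Fin r → F}
    (hlam : ∀ i, lam i ^ p = 1 ∧ lam i ≠ 1)
    {f : MvPolynomial (DVar r s) F} (hσ : sigmaMap F r s f = f) (hρ : rhoMap F r s lam f = f)
    (h0 : constantCoeff f = 0) (h : MvPolynomial (DVar r s) F) :
    ∑ bT : Bool × Finset (Fin s), coeff (eE p i₀ bT.1 bT.2) (h * f) = 0 := by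
  classical
  simp_rw [coeff_mul]
  rw [Finset.sum_sigma' Finset.univ
    (fun bT : Bool × Finset (Fin s) => Finset.HasAntidiagonal.antidiagonal (eE p i₀ bT.1 bT.2))
    (fun _ x => coeff x.1 h * coeff x.2 f)]
  rw [← Finset.sum_filter_ne_zero]
  refine Finset.sum_involution
    (fun a _ => ⟨(decodeB i₀ (a.2.1 + sstar a.2.2), decodeT (a.2.1 + sstar a.2.2)),
      (a.2.1, sstar a.2.2)⟩) ?_ ?_ ?_ ?_
  · rintro ⟨⟨b, T⟩, ν, m⟩ ha
    show coeff ν h * coeff m f + coeff ν h * coeff (sstar m) f = 0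
    rw [coeff_sstar hσ]
    exact CharTwo.add_self_eq_zero _
  · rintro ⟨⟨b, T⟩, ν, m⟩ ha hne heq
    have hsm : sstar m = m := congrArg (fun x => x.2.2) heq
    rw [Finset.mem_filter, Finset.mem_sigma, Finset.HasAntidiagonal.mem_antidiagonal] at ha
    have hsum : ν + m = eE p i₀ b T := ha.1.2
    have hpt : ∀ v, ν v + m v = eFun p i₀ b T v := fun v => by
      rw [← Finsupp.add_apply, hsum, eE_apply]
    have hms : ∀ v, m v = m (dswap v) := fun v => by
      conv_lhs => rw [← hsm]
      rw [sstar_apply]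
    have hm0 : m = 0 := by
      ext v
      have h1 : m v ≤ eFun p i₀ b T v := by have := hpt v; omega
      have h2 : m v ≤ eFun p i₀ b T (dswap v) := by
        rw [hms v]; have := hpt (dswap v); omega
      simp only [Finsupp.coe_zero, Pi.zero_apply]
      rcases v with (i | i) | (j | j) <;> cases b <;>
        simp only [dswap, eFun] at h1 h2 <;>
        split_ifs at h1 h2 <;> first | omega | simp_all
    rw [hm0] at hne
    have hc0 : coeff (0 : DVar r s →₀ ℕ) f = 0 := by
      rw [← show constantCoeff f = coeff 0 f from congrFun constantCoeff_eq f]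
      exact h0
    rw [hc0, mul_zero] at hne
    exact hne rfl
  · rintro ⟨⟨b, T⟩, ν, m⟩ ha
    rw [Finset.mem_filter, Finset.mem_sigma, Finset.HasAntidiagonal.mem_antidiagonal] at ha
    have hne : coeff ν h * coeff m f ≠ 0 := ha.2
    have hcm : coeff m f ≠ 0 := fun hc => hne (by rw [hc, mul_zero])
    have hw := weight_eq_one hρ hcm
    rw [Finset.mem_filter, Finset.mem_sigma, Finset.HasAntidiagonal.mem_antidiagonal]
    refine ⟨⟨Finset.mem_univ _, ?_⟩, ?_⟩
    · exact key hp hlam ha.1.2 hw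
    · show coeff ν h * coeff (sstar m) f ≠ 0
      rw [coeff_sstar hσ]
      exact hne
  · rintro ⟨⟨b, T⟩, ν, m⟩ ha
    rw [Finset.mem_filter, Finset.mem_sigma, Finset.HasAntidiagonal.mem_antidiagonal] at ha
    have hsum : ν + m = eE p i₀ b T := ha.1.2
    show (⟨(decodeB i₀ (ν + sstar (sstar m)), decodeT (ν + sstar (sstar m))),
      (ν, sstar (sstar m))⟩ :
        (_ : Bool × Finset (Fin s)) × ((DVar r s →₀ ℕ) × (DVar r s →₀ ℕ))) = _
    rw [sstar_sstar, hsum, decodeB_eE p i₀ hp.pos.ne', decodeT_eE]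

lemma prod_X_w (t : Finset (Fin s)) :
    (∏ j ∈ t, X (.inr (.inr j)) : MvPolynomial (DVar r s) F)
      = monomial (∑ j ∈ t, Finsupp.single (.inr (.inr j) : DVar r s) 1) 1 := by
  have hX : ∀ v : DVar r s, (X v : MvPolynomial (DVar r s) F)
      = monomial (Finsupp.single v 1) 1 := fun v => by
    rw [← pow_one (X v), X_pow_eq_monomial]
  induction t using Finset.induction_on with
  | empty => simp
  | insert _ _ hnm ih =>
    rw [Finset.prod_insert hnm, Finset.sum_insert hnm, ih, hX, monomial_mul, one_mul]

lemma target_eq (p : ℕ) (i₀ : Fin r) :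
    ((X (.inl (.inr i₀)) : MvPolynomial (DVar r s) F) ^ p * ∏ j : Fin s, X (.inr (.inr j)))
      = monomial (eE p i₀ false ∅) 1 := by
  have hAB : (Finsupp.single (.inl (.inr i₀) : DVar r s) p
      + ∑ j : Fin s, Finsupp.single (.inr (.inr j) : DVar r s) 1) = eE p i₀ false ∅ := by
    ext v
    rcases v with (i | i) | (j | j) <;>
      simp [eE_apply, eFun, Finsupp.single_apply, Finsupp.finset_sum_apply, eq_comm]
  rw [X_pow_eq_monomial, prod_X_w, monomial_mul, one_mul, hAB]

lemma L_target (hp0 : p ≠ 0) :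
    ∑ bT : Bool × Finset (Fin s),
      coeff (eE p i₀ bT.1 bT.2)
        ((monomial (eE p i₀ false ∅) 1 : MvPolynomial (DVar r s) F)) = 1 := by
  classical
  simp_rw [coeff_monomial]
  have hcond : ∀ bT : Bool × Finset (Fin s),
      (if eE p i₀ false ∅ = eE p i₀ bT.1 bT.2 then (1 : F) else 0)
        = if bT = ((false, ∅) : Bool × Finset (Fin s)) then 1 else 0 := by
    intro bT
    congr 1
    apply propext
    constructor
    · intro hEq
      have hb := congrArg (decodeB i₀) hEq
      have ht := congrArg decodeT hEq
      rw [decodeB_eE p i₀ hp0, decodeB_eE p i₀ hp0] at hb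
      rw [decodeT_eE, decodeT_eE] at ht
      exact Prod.ext hb.symm ht.symm
    · intro hEq
      rw [hEq]
  simp_rw [hcond]
  simp

end Main

end Stmt17

/-- For `p` an odd prime and `r ≥ 1`, the monomial `y₁^p·w₁⋯w_s` does not lie
in the Hilbert ideal `I_H`; consequently the top degree of the coinvariants is at least
`p + s`. -/
theorem y_pow_p_mul_prod_w_not_mem_hilbertIdeal
    {F : Type*} [Field F] [CharP F 2] {r s p : ℕ} (hp : p.Prime) (hodd : Odd p) (hr : 1 ≤ r)
    (ζ : F) (hζ : IsPrimitiveRoot ζ p)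
    (lam : Fin r → F) (hlam : ∀ i, lam i ^ p = 1 ∧ lam i ≠ 1) :
    ((X (Sum.inl (Sum.inr (⟨0, hr⟩ : Fin r)))) ^ p * ∏ j : Fin s, X (Sum.inr (Sum.inr j))
        : MvPolynomial (DVar r s) F) ∉ HilbertIdeal F r s lam ∧
    ∃ f : MvPolynomial (DVar r s) F,
      f.IsHomogeneous (p + s) ∧ f ∉ HilbertIdeal F r s lam := by
  classical
  set i₀ : Fin r := ⟨0, hr⟩ with hi₀
  let L : MvPolynomial (DVar r s) F → F :=
    fun g => ∑ bT : Bool × Finset (Fin s), coeff (Stmt17.eE p i₀ bT.1 bT.2) g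
  have Ladd : ∀ a b, L (a + b) = L a + L b := fun a b => by
    simp [L, coeff_add, Finset.sum_add_distrib]
  let K : Ideal (MvPolynomial (DVar r s) F) :=
    { carrier := {g | ∀ h, L (h * g) = 0}
      zero_mem' := by intro h; simp [L]
      add_mem' := by
        intro a b ha hb h
        rw [mul_add, Ladd, ha h, hb h, add_zero]
      smul_mem' := by
        intro c g hg h
        rw [smul_eq_mul, ← mul_assoc]
        exact hg (h * c) }
  have hKle : HilbertIdeal F r s lam ≤ K := by
    rw [HilbertIdeal]
    apply Ideal.span_le.mpr
    rintro g ⟨hσ, hρ, h0⟩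
    exact fun h => Stmt17.main hp hlam hσ hρ h0 h
  have htar : ((X (Sum.inl (Sum.inr i₀)) : MvPolynomial (DVar r s) F) ^ p
      * ∏ j : Fin s, X (Sum.inr (Sum.inr j))) = monomial (Stmt17.eE p i₀ false ∅) 1 :=
    Stmt17.target_eq p i₀
  have hnot : ((X (Sum.inl (Sum.inr i₀)) : MvPolynomial (DVar r s) F) ^ p
      * ∏ j : Fin s, X (Sum.inr (Sum.inr j))) ∉ HilbertIdeal F r s lam := by
    intro hmem
    have h1 := hKle hmem 1
    rw [one_mul] at h1
    rw [htar] at h1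
    have h2 := Stmt17.L_target (p := p) (i₀ := i₀) (F := F) (s := s) hp.pos.ne'
    rw [show L (monomial (Stmt17.eE p i₀ false ∅) 1) =
      ∑ bT : Bool × Finset (Fin s), coeff (Stmt17.eE p i₀ bT.1 bT.2)
        ((monomial (Stmt17.eE p i₀ false ∅) 1 : MvPolynomial (DVar r s) F)) from rfl, h2] at h1
    exact one_ne_zero h1
  refine ⟨hnot, ⟨_, ?_, hnot⟩⟩
  have h1 : ((X (Sum.inl (Sum.inr i₀)) : MvPolynomial (DVar r s) F) ^ p).IsHomogeneous p := by
    simpa using (isHomogeneous_X F (.inl (.inr i₀) : DVar r s)).pow p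
  have h2 : (∏ j : Fin s, (X (Sum.inr (Sum.inr j)) : MvPolynomial (DVar r s) F)).IsHomogeneous
      s := by
    have := MvPolynomial.IsHomogeneous.prod Finset.univ
      (fun j : Fin s => (X (Sum.inr (Sum.inr j)) : MvPolynomial (DVar r s) F))
      (fun _ => 1) (fun j _ => isHomogeneous_X F _)
    simpa using this
  simpa using h1.mul h2
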